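/- Let (g,D) be a difference Lie algebra over a field k, (V,ϱ,K) a representation of (g,D), and let (ω,χ) and (ω',χ') be two pairs with ω, ω': g × g → V alternating bilinear and χ, χ': g → V linear. Suppose they are cohomologous, i.e. there is a linear map N: g → V such that for all x,y ∈ g: ω(x,y) − ω'(x,y) = ϱ(x)N(y) − ϱ(y)N(x) − N(⁅x,y⁆) and χ(x) − χ'(x) = K(N(x)) − N(D x). Define on g × V the brackets B_ω((x,u),(y,v)) = (⁅x,y⁆, ϱ(x)v − ϱ(y)u + ω(x,y)) and B_{ω'} analogously, the maps D_χ(x,u) = (D x, K u + χ(x)) and D_{χ'} analogously, and κ: g × V → g × V by κ(x,u) = (x, N(x) + u). Then κ is a linear bijection satisfying κ(B_ω(X,Y)) = B_{ω'}(κ(X), κ(Y)) for all X,Y ∈ g × V and D_{χ'} ∘ κ = κ ∘ D_χ; i.e. κ is an isomorphism of the corresponding abelian extensions of difference Lie algebras. -/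
import Mathlib


section

variable {k : Type*} [Field k] {g : Type*} [LieRing g] [LieAlgebra k g]
  {V : Type*} [AddCommGroup V] [Module k V]

/-- The bracket on `g × V` twisted by a 2-cochain `ω`:
`B_ω((x,u),(y,v)) = (⁅x,y⁆, ϱ(x)v − ϱ(y)u + ω(x,y))`. -/
def extBracket (ϱ : g →ₗ[k] Module.End k V) (ω : g → g → V) (X Y : g × V) : g × V :=
  (⁅X.1, Y.1⁆, ϱ X.1 Y.2 - ϱ Y.1 X.2 + ω X.1 Y.1)

/-- The operator on `g × V` twisted by a 1-cochain `χ`: `D_χ(x,u) = (D x, K u + χ(x))`. -/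
def extOp (D : g →ₗ[k] g) (K : V →ₗ[k] V) (χ : g → V) (X : g × V) : g × V :=
  (D X.1, K X.2 + χ X.1)

/-- The map `κ(x,u) = (x, N(x) + u)` on `g × V`. -/
def extIso (N : g → V) (X : g × V) : g × V :=
  (X.1, N X.1 + X.2)

end

/-- If two pairs `(ω, χ)` and `(ω', χ')` are cohomologous via `N`, then
`κ(x,u) = (x, N(x) + u)` is a linear bijection intertwining the brackets `B_ω`, `B_{ω'}`
and the operators `D_χ`, `D_{χ'}`; i.e. `κ` is an isomorphism of the corresponding abelian
extensions of difference Lie algebras. -/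
theorem cohomologous_cocycles_isomorphic_extensions {k : Type*} [Field k] {g : Type*}
    [LieRing g] [LieAlgebra k g] {V : Type*} [AddCommGroup V] [Module k V]
    (D : g →ₗ[k] g)
    (hD : ∀ x y : g, D ⁅x, y⁆ = ⁅D x, y⁆ + ⁅x, D y⁆ + ⁅D x, D y⁆)
    (ϱ : g →ₗ[k] Module.End k V)
    (hrep : ∀ x y : g, ϱ ⁅x, y⁆ = ϱ x ∘ₗ ϱ y - ϱ y ∘ₗ ϱ x)
    (K : V →ₗ[k] V)
    (hK : ∀ (x : g) (u : V), K (ϱ x u) = ϱ (D x) u + ϱ x (K u) + ϱ (D x) (K u))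
    (ω ω' : g →ₗ[k] g →ₗ[k] V) (hω : ∀ x : g, ω x x = 0) (hω' : ∀ x : g, ω' x x = 0)
    (χ χ' : g →ₗ[k] V) (N : g →ₗ[k] V)
    (hcohom1 : ∀ x y : g, ω x y - ω' x y = ϱ x (N y) - ϱ y (N x) - N ⁅x, y⁆)
    (hcohom2 : ∀ x : g, χ x - χ' x = K (N x) - N (D x)) :
    Function.Bijective (extIso (V := V) ⇑N) ∧
    (∀ (c : k) (X Y : g × V), extIso ⇑N (c • X + Y) = c • extIso ⇑N X + extIso ⇑N Y) ∧
    (∀ X Y : g × V,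
      extIso ⇑N (extBracket ϱ (fun a b => ω a b) X Y) =
        extBracket ϱ (fun a b => ω' a b) (extIso ⇑N X) (extIso ⇑N Y)) ∧
    (∀ X : g × V, extOp D K ⇑χ' (extIso ⇑N X) = extIso ⇑N (extOp D K ⇑χ X)) := by
  refine ⟨?_, ?_, ?_, ?_⟩
  · refine Function.bijective_iff_has_inverse.2 ⟨fun X => (X.1, X.2 - N X.1), ?_, ?_⟩ <;>
      intro X <;> simp [extIso]
  · intro c X Y
    simp [extIso, Prod.smul_def, Prod.ext_iff, smul_add]
    abel
  · intro X Y
    have h := hcohom1 X.1 Y.1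
    simp only [extIso, extBracket, Prod.ext_iff]
    refine ⟨trivial, ?_⟩
    have : N ⁅X.1, Y.1⁆ = ϱ X.1 (N Y.1) - ϱ Y.1 (N X.1) - (ω X.1 Y.1 - ω' X.1 Y.1) := by
      rw [hcohom1]; abel
    rw [this]
    simp [map_add]
    abel
  · intro X
    have h := hcohom2 X.1
    simp only [extIso, extOp, Prod.ext_iff]
    refine ⟨trivial, ?_⟩
    have : χ' X.1 = χ X.1 - K (N X.1) + N (D X.1) := by
      rw [← sub_sub_self (χ X.1) (χ' X.1), h]; abel
    rw [this]
    simp [map_add]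
    abel
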